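/- For all integers n ≥ 1, m ≥ 1 and every rational number x, one has Σ_{k=0}^{n} f^A_{n−k}(n,m)·(x−1)^k = Σ_{k=0}^{n} h^A_{n−k}(n,m)·x^k, where h^A_k(n,m) = (1/(k+1))·C(n,k)·C((n+1)m, k); that is, the h-vector of the generalized cluster complex Δ^m(A_n) is given by h_k = (1/(k+1))·C(n,k)·C((n+1)m, k) (the type-A m-Narayana numbers). -/
import Mathlib


open Finset

/-- The binomial coefficient `C(a, b)` for integers `a, b`, with the convention
that it vanishes unless `0 ≤ b ≤ a`. -/
def cc (a b : ℤ) : ℚ :=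
  if 0 ≤ b ∧ b ≤ a then (a.toNat.choose b.toNat : ℚ) else 0

/-- The type-A face numbers `f^A_k(n, m) = (1/(k+1))·C(n,k)·C((n+1)m+k+1, k)`:
the number of `k`-element faces of the generalized cluster complex `Δ^m(A_n)`. -/
def fA (n m k : ℕ) : ℚ :=
  1 / ((k : ℚ) + 1) * cc n k * cc (((n : ℤ) + 1) * m + k + 1) k

/-- The type-B face numbers `f^B_k(n, m) = C(n,k)·C(nm+k, k)`:
the number of `k`-element faces of the generalized cluster complex `Δ^m(B_n)`. -/
def fB (n m k : ℕ) : ℚ :=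
  cc n k * cc ((n : ℤ) * m + k) k

/-- The type-D face numbers
`f^D_k(n, m) = C(n,k)·C((n-1)m+k, k) + C(n-2,k-2)·C((n-1)m+k-1, k)`:
the number of `k`-element faces of the generalized cluster complex `Δ^m(D_n)`. -/
def fD (n m k : ℕ) : ℚ :=
  cc n k * cc (((n : ℤ) - 1) * m + k) k
    + cc ((n : ℤ) - 2) ((k : ℤ) - 2) * cc (((n : ℤ) - 1) * m + k - 1) k

lemma cc_natCast (a b : ℕ) : cc (a : ℤ) (b : ℤ) = (a.choose b : ℚ) := by
  unfold cc
  split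
  · simp
  · next h =>
    have : a < b := by
      push_neg at h
      have := h (Int.natCast_nonneg b)
      exact_mod_cast this
    rw [Nat.choose_eq_zero_of_lt this, Nat.cast_zero]

lemma choose_mul_choose_symm (n k j : ℕ) (h : k + j ≤ n) :
    n.choose k * (n - k).choose j = n.choose j * (n - j).choose k := by
  have hk : k ≤ n := le_trans (Nat.le_add_right _ _) h
  have hj : j ≤ n := le_trans (Nat.le_add_left _ _) h
  have hjk : j ≤ n - k := by omega
  have hkj : k ≤ n - j := by omega
  have e1 := Nat.choose_mul_factorial_mul_factorial hk
  have e2 := Nat.choose_mul_factorial_mul_factorial hjk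
  have e3 := Nat.choose_mul_factorial_mul_factorial hj
  have e4 := Nat.choose_mul_factorial_mul_factorial hkj
  have hpos : 0 < k.factorial * j.factorial * (n - k - j).factorial :=
    Nat.mul_pos (Nat.mul_pos k.factorial_pos j.factorial_pos) (n - k - j).factorial_pos
  apply Nat.eq_of_mul_eq_mul_right hpos
  have h1 : n - k - j = n - j - k := by omega
  calc n.choose k * (n - k).choose j * (k.factorial * j.factorial * (n - k - j).factorial)
      = (n.choose k * k.factorial * (n-k).factorial) * 1 := by
        rw [← e2]; ring
    _ = n.factorial := by rw [e1, mul_one]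
    _ = (n.choose j * j.factorial * (n-j).factorial) * 1 := by rw [e3, mul_one]
    _ = n.choose j * (n - j).choose k * (k.factorial * j.factorial * (n - j - k).factorial) := by
        rw [← e4]; ring
    _ = _ := by rw [h1]

lemma nat_core (M i : ℕ) :
    ∑ r ∈ range (i + 1), (i + 1).choose (r + 1) * M.choose r = (i + 1 + M).choose i := by
  rw [Nat.add_choose_eq, Finset.Nat.sum_antidiagonal_eq_sum_range_succ_mk]
  rw [← Finset.sum_range_reflect]
  refine Finset.sum_congr rfl fun r hr => ?_
  rw [Finset.mem_range] at hr
  simp only [Nat.add_sub_cancel]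
  have h2 : (i + 1).choose (i - r + 1) = (i + 1).choose r := by
    rw [← Nat.choose_symm (show i - r + 1 ≤ i + 1 by omega)]
    congr 1
    omega
  rw [h2]

lemma q_core (M i : ℕ) :
    ∑ r ∈ range (i + 1), (i.choose r : ℚ) * M.choose r / (r + 1)
      = ((M + i + 1).choose i : ℚ) / (i + 1) := by
  have key : ∀ r : ℕ, (i.choose r : ℚ) / (r + 1) = ((i+1).choose (r+1) : ℚ) / (i + 1) := by
    intro r
    have h' : ((i:ℚ) + 1) * i.choose r = ((i+1).choose (r+1) : ℚ) * (r + 1) := by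
      exact_mod_cast Nat.add_one_mul_choose_eq i r
    have hr1 : ((r:ℚ) + 1) ≠ 0 := by positivity
    have hi1 : ((i:ℚ) + 1) ≠ 0 := by positivity
    field_simp
    linarith [h']
  calc ∑ r ∈ range (i + 1), (i.choose r : ℚ) * M.choose r / (r + 1)
      = ∑ r ∈ range (i + 1), ((i+1).choose (r+1) : ℚ) * M.choose r / (i + 1) := by
        refine Finset.sum_congr rfl fun r _ => ?_
        rw [mul_comm ((i.choose r : ℚ)) _, mul_div_assoc, key r]
        ring
    _ = (∑ r ∈ range (i + 1), ((i+1).choose (r+1) : ℚ) * M.choose r) / (i + 1) := by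
        rw [Finset.sum_div]
    _ = _ := by
        congr 1
        have h := nat_core M i
        rw [show i + 1 + M = M + i + 1 by ring] at h
        rw [← h]
        push_cast
        ring

lemma coeff_lemma (n M j : ℕ) (hj : j ≤ n) :
    ∑ k ∈ range (n + 1), (n.choose k : ℚ) * M.choose k / (k + 1) * (n - k).choose j
      = (n.choose (n - j) : ℚ) * ((M + (n - j) + 1).choose (n - j)) / ((n - j : ℕ) + 1) := by
  set i := n - j with hi
  have step : ∀ k ∈ range (n + 1),
      (n.choose k : ℚ) * M.choose k / (k + 1) * (n - k).choose j
        = (n.choose j : ℚ) * ((i.choose k : ℚ) * M.choose k / (k + 1)) := by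
    intro k hk
    rw [Finset.mem_range] at hk
    by_cases hki : k ≤ i
    · have hkj : k + j ≤ n := by omega
      have key := choose_mul_choose_symm n k j hkj
      have key' : (n.choose k : ℚ) * (n - k).choose j = (n.choose j : ℚ) * i.choose k := by
        exact_mod_cast key
      field_simp
      nlinarith [key']
    · have h1 : (n - k).choose j = 0 := Nat.choose_eq_zero_of_lt (by omega)
      have h2 : i.choose k = 0 := Nat.choose_eq_zero_of_lt (by omega)
      rw [h1, h2]
      simp
  rw [Finset.sum_congr rfl step, ← Finset.mul_sum]
  have hsub : range (i + 1) ⊆ range (n + 1) := by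
    apply Finset.range_subset_range.mpr; omega
  have hext : ∑ k ∈ range (n + 1), (i.choose k : ℚ) * M.choose k / (k + 1)
      = ∑ k ∈ range (i + 1), (i.choose k : ℚ) * M.choose k / (k + 1) := by
    refine (Finset.sum_subset hsub fun k _ hk => ?_).symm
    rw [Finset.mem_range, not_lt] at hk
    rw [Nat.choose_eq_zero_of_lt (by omega)]
    simp
  rw [hext, q_core M i, Nat.choose_symm hj]
  ring

/-- The `h`-vector of the generalized cluster complex `Δ^m(A_n)` is given by the
type-A `m`-Narayana numbers `h^A_k(n,m) = (1/(k+1))·C(n,k)·C((n+1)m, k)`: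
for every rational `x`,
`Σ_{k=0}^{n} f^A_{n−k}(n,m)·(x−1)^k = Σ_{k=0}^{n} h^A_{n−k}(n,m)·x^k`. -/
theorem h_vector_type_A (n m : ℕ) (hn : 1 ≤ n) (hm : 1 ≤ m) (x : ℚ) :
    ∑ k ∈ Finset.range (n + 1), fA n m (n - k) * (x - 1) ^ k
      = ∑ k ∈ Finset.range (n + 1),
          (1 / (((n - k : ℕ) : ℚ) + 1) * cc n ((n : ℤ) - k)
            * cc (((n : ℤ) + 1) * m) ((n : ℤ) - k)) * x ^ k := by
  set M := (n + 1) * m with hM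
  -- rewrite RHS coefficients
  have hRHS : ∀ k ∈ Finset.range (n + 1),
      (1 / (((n - k : ℕ) : ℚ) + 1) * cc n ((n : ℤ) - k)
        * cc (((n : ℤ) + 1) * m) ((n : ℤ) - k)) * x ^ k
      = ((n.choose (n - k) : ℚ) * (M.choose (n - k)) / ((n - k : ℕ) + 1)) * x ^ k := by
    intro k hk
    rw [Finset.mem_range] at hk
    have h1 : (n : ℤ) - k = ((n - k : ℕ) : ℤ) := by omega
    have h2 : ((n : ℤ) + 1) * m = ((M : ℕ) : ℤ) := by rw [hM]; push_cast; ring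
    rw [h1, h2, cc_natCast, cc_natCast]
    ring
  rw [Finset.sum_congr rfl hRHS]
  symm
  -- expand x^k
  have hxk : ∀ k : ℕ, x ^ k = ∑ j ∈ range (k + 1), (x - 1) ^ j * (k.choose j : ℚ) := by
    intro k
    have h := add_pow (x - 1) 1 k
    simp only [one_pow, mul_one] at h
    calc x ^ k = (x - 1 + 1) ^ k := by ring_nf
      _ = _ := h
  calc ∑ k ∈ Finset.range (n + 1),
          ((n.choose (n - k) : ℚ) * (M.choose (n - k)) / ((n - k : ℕ) + 1)) * x ^ k
      = ∑ k ∈ range (n + 1), ∑ j ∈ range (n + 1),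
          ((n.choose (n - k) : ℚ) * (M.choose (n - k)) / ((n - k : ℕ) + 1))
            * ((x - 1) ^ j * (k.choose j : ℚ)) := by
        refine Finset.sum_congr rfl fun k hk => ?_
        rw [Finset.mem_range] at hk
        rw [hxk k, Finset.mul_sum]
        refine Finset.sum_subset (Finset.range_subset_range.mpr (by omega)) fun j _ hj => ?_
        rw [Finset.mem_range, not_lt] at hj
        rw [Nat.choose_eq_zero_of_lt (show k < j by omega)]
        simp
    _ = ∑ j ∈ range (n + 1), (∑ k ∈ range (n + 1),
          ((n.choose (n - k) : ℚ) * (M.choose (n - k)) / ((n - k : ℕ) + 1)) * (k.choose j : ℚ))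
            * (x - 1) ^ j := by
        rw [Finset.sum_comm]
        refine Finset.sum_congr rfl fun j _ => ?_
        rw [Finset.sum_mul]
        refine Finset.sum_congr rfl fun k _ => by ring
    _ = ∑ j ∈ range (n + 1), fA n m (n - j) * (x - 1) ^ j := by
        refine Finset.sum_congr rfl fun j hj => ?_
        rw [Finset.mem_range] at hj
        congr 1
        -- reflect sum over k
        have hrefl : ∑ k ∈ range (n + 1),
            ((n.choose (n - k) : ℚ) * (M.choose (n - k)) / ((n - k : ℕ) + 1)) * (k.choose j : ℚ)
            = ∑ k ∈ range (n + 1),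
            ((n.choose k : ℚ) * (M.choose k) / ((k : ℕ) + 1)) * ((n - k).choose j : ℚ) := by
          rw [← Finset.sum_range_reflect]
          simp only [Nat.add_sub_cancel]
          refine Finset.sum_congr rfl fun k hk => ?_
          rw [Finset.mem_range] at hk
          rw [show n - (n - k) = k by omega]
        rw [hrefl, coeff_lemma n M j (by omega)]
        unfold fA
        have h1 : ((n : ℤ) + 1) * m + (n - j : ℕ) + 1 = ((M + (n - j) + 1 : ℕ) : ℤ) := by
          rw [hM]; push_cast; ring
        rw [h1, cc_natCast, cc_natCast]
        ring
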